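/- For every n ≥ 2, the sequence of encoded vertices v^n(1), v^n(2), …, v^n(2^{n−1}) is strictly increasing: for all 1 ≤ k < ℓ ≤ 2^{n−1}, v^n(k) < v^n(ℓ). -/

import Mathlib

/-- Integer encoding of a binary vector (MSB first): code(x) = Σ x_j 2^(m-j). -/
def code (x : List Bool) : ℕ := x.foldl (fun a b => 2 * a + (if b then 1 else 0)) 0

/-- m-bit binary representation (MSB first) of an integer k. -/
def decode (m k : ℕ) : List Bool := (List.range m).map (fun j => k.testBit (m - 1 - j))

/-- Agreement-indicator map: λ(x) lists 𝟙(x_i = x_j) for pairs i < j in lex order. -/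
def lam : List Bool → List Bool
  | [] => []
  | a :: t => (t.map (fun b => a == b)) ++ lam t

/-- Integer-level map λ#_n. -/
def lambdaSharp (n k : ℕ) : ℕ := code (lam (decode n k))

/-- Encoded vertices of 𝟙-CUT(n): v^n(k) = λ#_n(2^(n-1) + k - 1). -/
def v (n k : ℕ) : ℕ := lambdaSharp n (2 ^ (n - 1) + k - 1)
lemma code_foldl (l : List Bool) : ∀ a : ℕ,
    l.foldl (fun a b => 2 * a + (if b then 1 else 0)) a = a * 2 ^ l.length + code l := by
  induction l with
  | nil => intro a; simp [code]
  | cons b t ih =>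
    intro a
    simp only [List.foldl_cons, code, List.length_cons]
    rw [ih (2 * a + (if b then 1 else 0)), ih (2 * 0 + (if b then 1 else 0))]
    ring

lemma code_cons (b : Bool) (t : List Bool) :
    code (b :: t) = (if b then 1 else 0) * 2 ^ t.length + code t := by
  show List.foldl _ _ (b :: t) = _
  rw [List.foldl_cons, code_foldl]
  simp

lemma code_append (x y : List Bool) :
    code (x ++ y) = code x * 2 ^ y.length + code y := by
  show List.foldl _ _ (x ++ y) = _
  rw [List.foldl_append, code_foldl]
  rfl

lemma code_lt (x : List Bool) : code x < 2 ^ x.length := by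
  induction x with
  | nil => simp [code]
  | cons b t ih =>
    rw [code_cons]
    have hb : (if b then 1 else 0) ≤ 1 := by split <;> omega
    have h1 : (if b then 1 else 0) * 2 ^ t.length ≤ 1 * 2 ^ t.length :=
      Nat.mul_le_mul_right _ hb
    simp only [List.length_cons, pow_succ]
    omega

lemma decode_length (m k : ℕ) : (decode m k).length = m := by simp [decode]

lemma decode_succ (m k : ℕ) : decode (m + 1) k = k.testBit m :: decode m k := by
  simp only [decode, List.range_succ_eq_map, List.map_cons, List.map_map,
    Nat.add_sub_cancel, Nat.sub_zero]
  congr 1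
  apply List.map_congr_left
  intro j _
  simp only [Function.comp_apply]
  congr 1
  omega

lemma code_decode (m k : ℕ) : code (decode m k) = k % 2 ^ m := by
  induction m with
  | zero => simp [decode, code, Nat.mod_one]
  | succ m ih =>
    rw [decode_succ, code_cons, decode_length, ih, Nat.testBit_eq_decide_div_mod_eq]
    have h2 : k % 2 ^ (m + 1) = k % 2 ^ m + 2 ^ m * (k / 2 ^ m % 2) := by
      rw [pow_succ, Nat.mod_mul]
    have h3 : k / 2 ^ m % 2 = 0 ∨ k / 2 ^ m % 2 = 1 := by omega
    rcases h3 with h3 | h3 <;> simp [h3, h2]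
    ring

lemma lam_cons_true (t : List Bool) : lam (true :: t) = t ++ lam t := by
  simp [lam]

lemma lam_length_eq : ∀ x y : List Bool, x.length = y.length →
    (lam x).length = (lam y).length
  | [], [], _ => rfl
  | a :: t, b :: s, h => by
    have h' : t.length = s.length := by simpa using h
    simp [lam, lam_length_eq t s h', h']

def L (m : ℕ) : ℕ := (lam (decode m 0)).length

lemma lam_decode_length (m k : ℕ) : (lam (decode m k)).length = L m :=
  lam_length_eq _ _ (by rw [decode_length, decode_length])

lemma v_formula (m j : ℕ) (hj : j < 2 ^ m) :
    ∃ r, r < 2 ^ L m ∧ v (m + 1) (j + 1) = j * 2 ^ L m + r := by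
  have hK : 2 ^ m + (j + 1) - 1 = 2 ^ m + j := by omega
  have htb : (2 ^ m + j).testBit m = true := by
    rw [Nat.testBit_eq_decide_div_mod_eq]
    have : (2 ^ m + j) / 2 ^ m = 1 := by
      rw [Nat.add_div_left j (Nat.pow_pos (n := m) (by norm_num))]
      rw [Nat.div_eq_of_lt hj]
    simp [this]
  have hdec : decode (m + 1) (2 ^ m + j) = true :: decode m (2 ^ m + j) := by
    rw [decode_succ, htb]
  refine ⟨code (lam (decode m (2 ^ m + j))), ?_, ?_⟩
  · have := code_lt (lam (decode m (2 ^ m + j)))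
    rwa [lam_decode_length] at this
  · show code (lam (decode (m + 1) (2 ^ m + (j + 1) - 1))) = _
    rw [hK, hdec, lam_cons_true, code_append, code_decode, lam_decode_length,
      Nat.add_mod_left, Nat.mod_eq_of_lt hj]

theorem stmt_5 (n : ℕ) (hn : 2 ≤ n) (k l : ℕ)
    (hk : 1 ≤ k) (hkl : k < l) (hl : l ≤ 2 ^ (n - 1)) :
    v n k < v n l := by
  obtain ⟨m, rfl⟩ : ∃ m, n = m + 1 := ⟨n - 1, by omega⟩
  simp only [Nat.add_sub_cancel] at hl ⊢
  obtain ⟨j1, rfl⟩ : ∃ j, k = j + 1 := ⟨k - 1, by omega⟩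
  obtain ⟨j2, rfl⟩ : ∃ j, l = j + 1 := ⟨l - 1, by omega⟩
  have hj1 : j1 < 2 ^ m := by omega
  have hj2 : j2 < 2 ^ m := by omega
  obtain ⟨r1, hr1, e1⟩ := v_formula m j1 hj1
  obtain ⟨r2, hr2, e2⟩ := v_formula m j2 hj2
  rw [e1, e2]
  have hj : j1 + 1 ≤ j2 := by omega
  have hmul : (j1 + 1) * 2 ^ L m ≤ j2 * 2 ^ L m := Nat.mul_le_mul_right _ hj
  nlinarith
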